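/- For n = 3m+2 and x ∈ {0,1}^n, let f_i = x_i for 1 ≤ i ≤ m+2, and for 1 ≤ i ≤ m+3 let g_i = [∑_{j=m+3}^{n} x_j ≥ ⌈m/2 - 1⌉ + i - 1]. Then the majority of these 2m+5 gate values equals MAJ_n(x), i.e., [∑_{i=1}^{m+2} x_i + ∑_{i=1}^{m+3} g_i ≥ (2m+5)/2] = [∑_{j=1}^{n} x_j ≥ n/2]. -/

import Mathlib

lemma sum_indicator_le (N : ℕ) (t : ℤ) :
    (∑ i ∈ Finset.Icc 1 N, (if (i : ℤ) ≤ t then (1 : ℕ) else 0)) = min N t.toNat := by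
  induction N with
  | zero => simp
  | succ N ih =>
    rw [Finset.sum_Icc_succ_top (by omega), ih]
    split_ifs with h
    · push_cast at h; omega
    · push_cast at h; omega

lemma ceil_val (m : ℕ) : ⌈(m : ℚ) / 2 - 1⌉ = ((m : ℤ) + 1) / 2 - 1 := by
  rcases Nat.even_or_odd m with ⟨k, hk⟩ | ⟨k, hk⟩
  · subst hk
    have : ((k + k : ℕ) : ℚ) / 2 - 1 = ((k : ℤ) - 1 : ℤ) := by push_cast; ring
    rw [this, Int.ceil_intCast]; push_cast; omega
  · subst hk
    have h1 : ((2 * k + 1 : ℕ) : ℚ) / 2 - 1 = (k : ℤ) - 1 / 2 := by push_cast; ring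
    rw [h1]
    have : ⌈((k : ℤ) : ℚ) - 1 / 2⌉ = (k : ℤ) := by
      rw [Int.ceil_eq_iff] <;> norm_num
    rw [this]; push_cast; omega

/-- Case `n = 3m + 2` of the depth-two majority circuit.
Gates: `f_i = x_i` for `1 ≤ i ≤ m+2`, and `g_i = [sum_M(x) ≥ ⌈m/2 - 1⌉ + i - 1]`
for `1 ≤ i ≤ m+3`, where `M = {m+3, …, n}`.  The majority of these `2m+5` gate
values equals `MAJ_n(x)`. -/
theorem maj_circuit_case_mod2 (n m : ℕ) (hn : n = 3 * m + 2) (x : ℕ → Bool) :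
    (((∑ i ∈ Finset.Icc 1 (m + 2), (if x i then 1 else 0)) +
        ∑ i ∈ Finset.Icc 1 (m + 3),
          (if ((∑ j ∈ Finset.Icc (m + 3) n, (if x j then 1 else 0) : ℕ) : ℤ) ≥
              ⌈(m : ℚ) / 2 - 1⌉ + i - 1 then 1 else 0) : ℕ) : ℚ) ≥
        (2 * (m : ℚ) + 5) / 2 ↔
      ((∑ j ∈ Finset.Icc 1 n, (if x j then 1 else 0) : ℕ) : ℚ) ≥ (n : ℚ) / 2 := by
  subst hn
  set A : ℕ := ∑ i ∈ Finset.Icc 1 (m + 2), (if x i then 1 else 0) with hA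
  set B : ℕ := ∑ j ∈ Finset.Icc (m + 3) (3 * m + 2), (if x j then 1 else 0) with hB
  have hAle : A ≤ m + 2 := by
    calc A ≤ ∑ i ∈ Finset.Icc 1 (m + 2), 1 :=
        Finset.sum_le_sum (fun i _ => by split_ifs <;> omega)
      _ = m + 2 := by simp
  have hBle : B ≤ 2 * m := by
    calc B ≤ ∑ i ∈ Finset.Icc (m + 3) (3 * m + 2), 1 :=
        Finset.sum_le_sum (fun i _ => by split_ifs <;> omega)
      _ = 2 * m := by rw [Finset.sum_const, smul_eq_mul, Nat.card_Icc]; omega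
  have hsplit : (∑ j ∈ Finset.Icc 1 (3 * m + 2), (if x j then (1:ℕ) else 0)) = A + B := by
    rw [hA, hB, show Finset.Icc 1 (3*m+2) = Finset.Ioc 0 (3*m+2) from by
        rw [← Finset.Icc_add_one_left_eq_Ioc]; rfl,
      show Finset.Icc 1 (m+2) = Finset.Ioc 0 (m+2) from by rw [← Finset.Icc_add_one_left_eq_Ioc]; rfl,
      show Finset.Icc (m+3) (3*m+2) = Finset.Ioc (m+2) (3*m+2) from by
        rw [← Finset.Icc_add_one_left_eq_Ioc]; rfl,
      ← Finset.sum_Ioc_consecutive (fun j => if x j then (1:ℕ) else 0)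
        (show 0 ≤ m + 2 by omega) (show m + 2 ≤ 3 * m + 2 by omega)]
  set c : ℤ := ((m : ℤ) + 1) / 2 - 1 with hc
  have hG : (∑ i ∈ Finset.Icc 1 (m + 3),
      (if ((B : ℕ) : ℤ) ≥ ⌈(m : ℚ) / 2 - 1⌉ + i - 1 then (1:ℕ) else 0)) =
      min (m + 3) ((B : ℤ) - c + 1).toNat := by
    rw [← sum_indicator_le]
    refine Finset.sum_congr rfl (fun i _ => ?_)
    rw [ceil_val, ← hc]
    refine if_congr ?_ rfl rfl
    constructor <;> intro h <;> omega
  rw [hG, hsplit]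
  rw [ge_iff_le, ge_iff_le, div_le_iff₀ (by norm_num : (0:ℚ) < 2),
    div_le_iff₀ (by norm_num : (0:ℚ) < 2)]
  have e1 : (2 * (m : ℚ) + 5 ≤ (↑(A + min (m + 3) ((B : ℤ) - c + 1).toNat) : ℚ) * 2) ↔
      2 * m + 5 ≤ (A + min (m + 3) ((B : ℤ) - c + 1).toNat) * 2 := by
    exact_mod_cast Iff.rfl
  have e2 : ((((3:ℕ) * m + 2 : ℕ) : ℚ) ≤ (↑(A + B) : ℚ) * 2) ↔ 3 * m + 2 ≤ (A + B) * 2 := by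
    exact_mod_cast Iff.rfl
  push_cast
  rw [show ((3:ℚ) * m + 2) = (((3 * m + 2 : ℕ) : ℚ)) from by push_cast; ring] at *
  constructor <;> intro h
  · have := e1.mp (by push_cast; linarith)
    have : 3 * m + 2 ≤ (A + B) * 2 := by omega
    exact_mod_cast e2.mpr this
  · have := e2.mp (by exact_mod_cast h)
    have h3 : 2 * m + 5 ≤ (A + min (m + 3) ((B : ℤ) - c + 1).toNat) * 2 := by omega
    have := e1.mpr h3
    push_cast at this; linarith
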